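/- Let (w,Γ,I) be a pure ordered complex that is shifted with respect to w, and let A be an initial segment of w. Then the initial restriction (w,Γ)|A = (w|_A, Γ|A) and the initial contraction (w,Γ)/A = (w|_{I∖A}, link_Γ(φ)), where φ is the lexicographically minimal facet of Γ|A, are both shifted with respect to the induced orders. -/
import Mathlib


variable {α : Type*} [DecidableEq α]

/-- `Γ` is a simplicial complex on the finite ground set `E`. -/
def IsComplexOn (E : Finset α) (Γ : Set (Finset α)) : Prop :=
  (∅ : Finset α) ∈ Γ ∧ (∀ γ ∈ Γ, γ ⊆ E) ∧ ∀ γ ∈ Γ, ∀ β ⊆ γ, β ∈ Γ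

/-- `φ` is a facet (maximal face) of `Γ`. -/
def IsFacetOf (Γ : Set (Finset α)) (φ : Finset α) : Prop :=
  φ ∈ Γ ∧ ∀ ψ ∈ Γ, φ ⊆ ψ → ψ = φ

/-- A complex is pure if all facets have the same cardinality. -/
def IsPureC (Γ : Set (Finset α)) : Prop :=
  ∀ φ ψ, IsFacetOf Γ φ → IsFacetOf Γ ψ → φ.card = ψ.card

/-- The restriction `Γ|S` of a simplicial complex. -/
def restrictC (Γ : Set (Finset α)) (S : Finset α) : Set (Finset α) :=
  {γ ∈ Γ | γ ⊆ S}

/-- The link of a face `σ` in `Γ`. -/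
def linkC (Γ : Set (Finset α)) (σ : Finset α) : Set (Finset α) :=
  {β | Disjoint β σ ∧ β ∪ σ ∈ Γ}

/-- Strict lexicographic order on finite subsets with respect to the linear order `w`. -/
def lexLT (w : LinearOrder α) (s t : Finset α) : Prop :=
  ∃ m, m ∈ s ∧ m ∉ t ∧ ∀ x, w.lt x m → (x ∈ s ↔ x ∈ t)

def lexLE (w : LinearOrder α) (s t : Finset α) : Prop :=
  s = t ∨ lexLT w s t

/-- `φ` is the lexicographically minimal facet of `Γ` with respect to `w`. -/
def IsLexMinFacet (w : LinearOrder α) (Γ : Set (Finset α)) (φ : Finset α) : Prop :=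
  IsFacetOf Γ φ ∧ ∀ ψ, IsFacetOf Γ ψ → lexLE w φ ψ

/-- `A` is an initial segment of the linear order `w` on the ground set `E`. -/
def IsInitialSeg (w : LinearOrder α) (E A : Finset α) : Prop :=
  A ⊆ E ∧ ∀ x ∈ A, ∀ y ∈ E, w.le y x → y ∈ A

/-- The ordered complex `(w,Γ)` with vertex set `V` is shifted: exchanging a vertex of a
face for a `w`-smaller vertex of `V` again yields a face. -/
def IsShiftedOrd (w : LinearOrder α) (V : Finset α) (Γ : Set (Finset α)) : Prop :=
  ∀ γ ∈ Γ, ∀ e ∈ γ, ∀ f ∈ V, w.lt f e → f ∉ γ → insert f (γ.erase e) ∈ Γ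

/-- Initial restrictions and initial contractions of a pure shifted ordered complex are
shifted (with respect to the induced orders). -/
theorem shifted_initial_restriction_contraction
    (w : LinearOrder α) (E : Finset α) (Γ : Set (Finset α))
    (hΓ : IsComplexOn E Γ) (hpure : IsPureC Γ) (hsh : IsShiftedOrd w E Γ)
    (A : Finset α) (hA : IsInitialSeg w E A) :
    IsShiftedOrd w A (restrictC Γ A) ∧
    ∀ φ, IsLexMinFacet w (restrictC Γ A) φ →
      IsShiftedOrd w (E \ A) (linkC Γ φ) := by
  obtain ⟨hA1, hA2⟩ := hA
  constructor
  · intro γ hγ e he f hf hlt hfγ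
    obtain ⟨hγΓ, hγA⟩ := hγ
    refine ⟨hsh γ hγΓ e he f (hA1 hf) hlt hfγ, ?_⟩
    intro x hx
    rcases Finset.mem_insert.mp hx with h | h
    · exact h ▸ hf
    · exact hγA (Finset.erase_subset e γ h)
  · intro φ hφ β hβ e he f hf hlt hfβ
    obtain ⟨hdisj, hβφ⟩ := hβ
    have hφA : φ ⊆ A := hφ.1.1.2
    have hfA : f ∉ A := (Finset.mem_sdiff.mp hf).2
    have hfφ : f ∉ φ := fun h => hfA (hφA h)
    have heφ : e ∉ φ := Finset.disjoint_left.mp hdisj he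
    have key := hsh (β ∪ φ) hβφ e (Finset.mem_union_left φ he) f
      ((Finset.mem_sdiff.mp hf).1) hlt (by simp [hfβ, hfφ])
    constructor
    · rw [Finset.disjoint_left]
      intro x hx
      rcases Finset.mem_insert.mp hx with h | h
      · exact h ▸ hfφ
      · exact Finset.disjoint_left.mp hdisj (Finset.erase_subset e β h)
    · have h2 : insert f (β.erase e) ∪ φ = insert f ((β ∪ φ).erase e) := by
        rw [Finset.erase_union_distrib, Finset.erase_eq_of_notMem heφ,
          Finset.insert_union]
      rw [h2]; exact key
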